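/- arXiv:1705.09335 — 3 statements merged into one kernel-verified Lean document; each statement's English description precedes it below -/
import Mathlib

section
/- For any feasible set of jobs $S$ (i.e., $\sum_{j \in S} \mu_j + \sqrt{\sum_{j \in S} b_j} \le 1$, with all $\mu_j, b_j \ge 0$), the sum $\sum_{j \in S} f(\mu_j, b_j)$ is at most $1$, where $f(a,b) = \frac{2a + b + \sqrt{b(4a+b)}}{2}$. -/
open Finset

noncomputable def f (a b : ℝ) : ℝ := (2 * a + b + Real.sqrt (b * (4 * a + b))) / 2

lemma sqrt_cs (x₁ y₁ x₂ y₂ : ℝ) (hx₁ : 0 ≤ x₁) (hy₁ : 0 ≤ y₁) (hx₂ : 0 ≤ x₂)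
    (hy₂ : 0 ≤ y₂) :
    Real.sqrt (x₁ * y₁) + Real.sqrt (x₂ * y₂) ≤ Real.sqrt ((x₁ + x₂) * (y₁ + y₂)) := by
  rw [Real.le_sqrt (by positivity)]
  have h1 : Real.sqrt (x₁ * y₁) ^ 2 = x₁ * y₁ := Real.sq_sqrt (by positivity)
  have h2 : Real.sqrt (x₂ * y₂) ^ 2 = x₂ * y₂ := Real.sq_sqrt (by positivity)
  have h3 : Real.sqrt (x₁ * y₁) * Real.sqrt (x₂ * y₂)
      = Real.sqrt (x₁ * y₂) * Real.sqrt (x₂ * y₁) := by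
    rw [← Real.sqrt_mul (by positivity), ← Real.sqrt_mul (by positivity)]
    ring_nf
  have h4 : Real.sqrt (x₁ * y₂) ^ 2 = x₁ * y₂ := Real.sq_sqrt (by positivity)
  have h5 : Real.sqrt (x₂ * y₁) ^ 2 = x₂ * y₁ := Real.sq_sqrt (by positivity)
  · nlinarith [sq_nonneg (Real.sqrt (x₁ * y₂) - Real.sqrt (x₂ * y₁))]
  · positivity

lemma f_superadd (a₁ b₁ a₂ b₂ : ℝ) (ha₁ : 0 ≤ a₁) (hb₁ : 0 ≤ b₁) (ha₂ : 0 ≤ a₂)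
    (hb₂ : 0 ≤ b₂) : f a₁ b₁ + f a₂ b₂ ≤ f (a₁ + a₂) (b₁ + b₂) := by
  unfold f
  have := sqrt_cs b₁ (4 * a₁ + b₁) b₂ (4 * a₂ + b₂) hb₁ (by linarith) hb₂ (by linarith)
  have heq : (b₁ + b₂) * (4 * a₁ + b₁ + (4 * a₂ + b₂))
      = (b₁ + b₂) * (4 * (a₁ + a₂) + (b₁ + b₂)) := by ring
  rw [heq] at this
  linarith

lemma f_le_one (M B : ℝ) (hM : 0 ≤ M) (hB : 0 ≤ B) (h : M + Real.sqrt B ≤ 1) :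
    f M B ≤ 1 := by
  unfold f
  set s := Real.sqrt B with hs
  have hs0 : 0 ≤ s := Real.sqrt_nonneg B
  have hs2 : s ^ 2 = B := Real.sq_sqrt hB
  have h1 : Real.sqrt (4 * M + B) ≤ 2 - s := by
    have : 4 * M + B ≤ (2 - s) ^ 2 := by nlinarith
    calc Real.sqrt (4 * M + B) ≤ Real.sqrt ((2 - s) ^ 2) := Real.sqrt_le_sqrt this
      _ = |2 - s| := Real.sqrt_sq_eq_abs _
      _ = 2 - s := abs_of_nonneg (by nlinarith)
  have h2 : Real.sqrt (B * (4 * M + B)) = s * Real.sqrt (4 * M + B) :=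
    Real.sqrt_mul hB _
  have h3 : s * Real.sqrt (4 * M + B) ≤ s * (2 - s) :=
    mul_le_mul_of_nonneg_left h1 hs0
  nlinarith

theorem feasible_f_sum_le_one {ι : Type*} (S : Finset ι) (μ b : ι → ℝ)
    (hμ : ∀ j ∈ S, 0 ≤ μ j) (hb : ∀ j ∈ S, 0 ≤ b j)
    (hfeas : ∑ j ∈ S, μ j + Real.sqrt (∑ j ∈ S, b j) ≤ 1) :
    ∑ j ∈ S, f (μ j) (b j) ≤ 1 := by
  have hMsum : 0 ≤ ∑ j ∈ S, μ j := Finset.sum_nonneg hμ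
  have hBsum : 0 ≤ ∑ j ∈ S, b j := Finset.sum_nonneg hb
  have key : ∀ (T : Finset ι), (∀ j ∈ T, 0 ≤ μ j) → (∀ j ∈ T, 0 ≤ b j) →
      ∑ j ∈ T, f (μ j) (b j) ≤ f (∑ j ∈ T, μ j) (∑ j ∈ T, b j) := by
    intro T
    induction T using Finset.cons_induction with
    | empty =>
      intro _ _
      simp [f]
    | cons a T' hx ih =>
      intro hμT hbT
      rw [Finset.sum_cons, Finset.sum_cons, Finset.sum_cons]
      have hμ' : ∀ j ∈ T', 0 ≤ μ j := fun j hj => hμT j (Finset.mem_cons_of_mem hj)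
      have hb' : ∀ j ∈ T', 0 ≤ b j := fun j hj => hbT j (Finset.mem_cons_of_mem hj)
      calc f (μ a) (b a) + ∑ j ∈ T', f (μ j) (b j)
          ≤ f (μ a) (b a) + f (∑ j ∈ T', μ j) (∑ j ∈ T', b j) := by
            linarith [ih hμ' hb']
        _ ≤ f (μ a + ∑ j ∈ T', μ j) (b a + ∑ j ∈ T', b j) :=
            f_superadd _ _ _ _ (hμT a (Finset.mem_cons_self a T'))
              (hbT a (Finset.mem_cons_self a T'))
              (Finset.sum_nonneg hμ') (Finset.sum_nonneg hb')
  calc ∑ j ∈ S, f (μ j) (b j) ≤ f (∑ j ∈ S, μ j) (∑ j ∈ S, b j) := key S hμ hb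
    _ ≤ 1 := f_le_one _ _ hMsum hBsum hfeas
end

section
/- Suppose jobs with parameters $\mu_j, b_j \ge 0$ are partitioned into $m$ nonempty sets $S_1,\dots,S_m$ such that $\mathrm{Cost}(S_i) = \sum_{j \in S_i}\mu_j + \sqrt{\sum_{j \in S_i} b_j} \ge 1 - \epsilon$ for every $i$, with $0 \le \epsilon \le 0.3$. If the jobs also admit a partition into $\mathrm{OPT}$ feasible sets (each with cost at most $1$), then $m \le \left(\frac{4}{3} + 3\epsilon\right)\mathrm{OPT}$. -/
open Finset

noncomputable def Cost {ι : Type*} (μ b : ι → ℝ) (S : Finset ι) : ℝ :=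
  ∑ j ∈ S, μ j + Real.sqrt (∑ j ∈ S, b j)

theorem eps_full_bound {ι : Type*} (μ b : ι → ℝ)
    (hμ : ∀ j, 0 ≤ μ j) (hb : ∀ j, 0 ≤ b j)
    (J : Finset ι) (m OPT : ℕ) (ε : ℝ) (hε0 : 0 ≤ ε) (hε1 : ε ≤ 0.3)
    (S : Fin m → Finset ι)
    (hSne : ∀ i, (S i).Nonempty)
    (hSdisj : ∀ i i', i ≠ i' → Disjoint (S i) (S i'))
    (hScover : ∀ j, j ∈ J ↔ ∃ i, j ∈ S i)
    (hfull : ∀ i, Cost μ b (S i) ≥ 1 - ε)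
    (T : Fin OPT → Finset ι)
    (hTdisj : ∀ i i', i ≠ i' → Disjoint (T i) (T i'))
    (hTcover : ∀ j, j ∈ J ↔ ∃ i, j ∈ T i)
    (hTfeas : ∀ i, Cost μ b (T i) ≤ 1) :
    (m : ℝ) ≤ (4 / 3 + 3 * ε) * OPT := by
  classical
  have hg : ∀ j, 0 ≤ μ j + b j := fun j => add_nonneg (hμ j) (hb j)
  have hw : ∀ i : Fin m, (3/4 : ℝ) - ε ≤ ∑ j ∈ S i, (μ j + b j) := by
    intro i
    have h1 := hfull i
    unfold Cost at h1
    have hbS : 0 ≤ ∑ j ∈ S i, b j := Finset.sum_nonneg fun j _ => hb j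
    have hsq : Real.sqrt (∑ j ∈ S i, b j) ^ 2 = ∑ j ∈ S i, b j := Real.sq_sqrt hbS
    rw [Finset.sum_add_distrib]
    nlinarith [Real.sqrt_nonneg (∑ j ∈ S i, b j),
      sq_nonneg (Real.sqrt (∑ j ∈ S i, b j) - 1/2)]
  have hTw : ∀ k : Fin OPT, ∑ j ∈ T k, (μ j + b j) ≤ 1 := by
    intro k
    have h1 := hTfeas k
    unfold Cost at h1
    have hbT : 0 ≤ ∑ j ∈ T k, b j := Finset.sum_nonneg fun j _ => hb j
    have hμT : 0 ≤ ∑ j ∈ T k, μ j := Finset.sum_nonneg fun j _ => hμ j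
    have hsq : Real.sqrt (∑ j ∈ T k, b j) ^ 2 = ∑ j ∈ T k, b j := Real.sq_sqrt hbT
    have hs1 : Real.sqrt (∑ j ∈ T k, b j) ≤ 1 := by linarith
    rw [Finset.sum_add_distrib]
    nlinarith [Real.sqrt_nonneg (∑ j ∈ T k, b j)]
  have hSsub : Finset.univ.biUnion S ⊆ J := by
    intro j hj
    obtain ⟨i, _, hji⟩ := Finset.mem_biUnion.mp hj
    exact (hScover j).mpr ⟨i, hji⟩
  have hJsub : J ⊆ Finset.univ.biUnion T := by
    intro j hj
    obtain ⟨i, hji⟩ := (hTcover j).mp hj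
    exact Finset.mem_biUnion.mpr ⟨i, Finset.mem_univ i, hji⟩
  have hSsum : ∑ i : Fin m, ∑ j ∈ S i, (μ j + b j)
      = ∑ j ∈ Finset.univ.biUnion S, (μ j + b j) :=
    (Finset.sum_biUnion (fun i _ i' _ h => hSdisj i i' h)).symm
  have hTsum : ∑ j ∈ Finset.univ.biUnion T, (μ j + b j)
      = ∑ k : Fin OPT, ∑ j ∈ T k, (μ j + b j) :=
    Finset.sum_biUnion (fun i _ i' _ h => hTdisj i i' h)
  have key : (m : ℝ) * (3/4 - ε) ≤ (OPT : ℝ) := by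
    calc (m : ℝ) * (3/4 - ε) = ∑ _i : Fin m, ((3:ℝ)/4 - ε) := by
          simp [Finset.sum_const, mul_comm]; ring
      _ ≤ ∑ i : Fin m, ∑ j ∈ S i, (μ j + b j) := Finset.sum_le_sum fun i _ => hw i
      _ = ∑ j ∈ Finset.univ.biUnion S, (μ j + b j) := hSsum
      _ ≤ ∑ j ∈ Finset.univ.biUnion T, (μ j + b j) :=
          Finset.sum_le_sum_of_subset_of_nonneg (hSsub.trans hJsub) (fun j _ _ => hg j)
      _ = ∑ k : Fin OPT, ∑ j ∈ T k, (μ j + b j) := hTsum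
      _ ≤ ∑ _k : Fin OPT, (1:ℝ) := Finset.sum_le_sum fun k _ => hTw k
      _ = OPT := by simp
  have hm0 : (0:ℝ) ≤ m := Nat.cast_nonneg _
  have hO : (0:ℝ) ≤ OPT := Nat.cast_nonneg _
  have haux : 0 ≤ (m : ℝ) * ε * (11/12 - 3*ε) :=
    mul_nonneg (mul_nonneg hm0 hε0) (by linarith)
  nlinarith [key, mul_nonneg hO hε0, haux]
end

section
/- Suppose the First-Fit algorithm produces machines where $n_1$ machines each hold a single job (set $S_1$ of jobs) and $n_2$ machines each hold at least two jobs (set $S_2$ of jobs), such that: (a) any pair of jobs in $S_1$ forms an infeasible set; (b) ordering the multi-job machines $M_1,\dots,M_{n_2}$ by purchase time, for each $i < n_2$ and each job $j \in M_{i+1}$, the set $M_i \cup \{j\}$ is infeasible. If the jobs admit a partition into $\mathrm{OPT}$ feasible sets, then $n_1 + n_2 \le \frac{9}{4}\mathrm{OPT} + 1$. -/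
open Finset

/-- Dual multipliers for the chain argument. -/
noncomputable def dseq (i : ℕ) : ℝ := 1/3 + (-1/2 : ℝ)^i / 6

lemma neg_half_abs (i : ℕ) : |(-1/2 : ℝ)^i| = (1/2 : ℝ)^i := by
  rw [abs_pow]
  congr 1
  rw [abs_of_nonpos (by norm_num : (-1/2 : ℝ) ≤ 0)]
  norm_num

lemma dseq_pos (i : ℕ) : 0 < dseq i := by
  have h1 : |(-1/2 : ℝ)^i| ≤ 1 := by
    rw [neg_half_abs]
    exact pow_le_one₀ (by norm_num) (by norm_num)
  have h2 := (abs_le.mp h1).1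
  unfold dseq
  linarith

lemma dseq_rec (i : ℕ) : dseq i + 2 * dseq (i+1) = 1 := by
  unfold dseq
  rw [pow_succ]
  ring

lemma dseq_sum (k : ℕ) : ∑ i ∈ range k, dseq i = k/3 + (1 - (-1/2 : ℝ)^k)/9 := by
  induction k with
  | zero => simp
  | succ k ih =>
    rw [Finset.sum_range_succ, ih]
    unfold dseq
    rw [pow_succ]
    push_cast
    ring

lemma dseq_sum_ge (k : ℕ) (hk : 1 ≤ k) : (k : ℝ)/3 + 1/12 ≤ ∑ i ∈ range k, dseq i := by
  rw [dseq_sum]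
  have h : (-1/2 : ℝ)^k ≤ 1/4 := by
    rcases Nat.lt_or_ge k 2 with h2 | h2
    · interval_cases k <;> norm_num
    · calc (-1/2 : ℝ)^k ≤ |(-1/2 : ℝ)^k| := le_abs_self _
      _ = (1/2 : ℝ)^k := neg_half_abs k
      _ ≤ (1/2 : ℝ)^2 := by
          apply pow_le_pow_of_le_one <;> norm_num
          omega
      _ = 1/4 := by norm_num
  linarith

theorem firstfit_nine_fourths {ι : Type*} [DecidableEq ι] (μ b : ι → ℝ)
    (hμ : ∀ j, 0 ≤ μ j) (hb : ∀ j, 0 ≤ b j)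
    (J S1 : Finset ι) (n2 OPT : ℕ)
    (M : Fin n2 → Finset ι)
    (hMcard : ∀ i, 2 ≤ (M i).card)
    (hMdisj : ∀ i i', i ≠ i' → Disjoint (M i) (M i'))
    (hS1M : ∀ i, Disjoint S1 (M i))
    (hcover : ∀ j, j ∈ J ↔ (j ∈ S1 ∨ ∃ i, j ∈ M i))
    -- (a) any pair of single jobs forms an infeasible set
    (hpairs : ∀ j ∈ S1, ∀ j' ∈ S1, j ≠ j' → Cost μ b ({j, j'} : Finset ι) > 1)
    -- (b) each job of the next multi-job machine is infeasible with the previous one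
    (hseq : ∀ i : Fin n2, ∀ h : (i : ℕ) + 1 < n2,
      ∀ j ∈ M ⟨(i : ℕ) + 1, h⟩, Cost μ b (M i ∪ {j}) > 1)
    (T : Fin OPT → Finset ι)
    (hTdisj : ∀ i i', i ≠ i' → Disjoint (T i) (T i'))
    (hTcover : ∀ j, j ∈ J ↔ ∃ i, j ∈ T i)
    (hTfeas : ∀ i, Cost μ b (T i) ≤ 1) :
    (S1.card + n2 : ℝ) ≤ 9 / 4 * OPT + 1 := by
  set w : ι → ℝ := fun j => μ j + b j with hw_def
  have hw : ∀ j, 0 ≤ w j := fun j => add_nonneg (hμ j) (hb j)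
  -- feasible sets have weight at most 1
  have sumw_le : ∀ S : Finset ι, Cost μ b S ≤ 1 → ∑ j ∈ S, w j ≤ 1 := by
    intro S hS
    unfold Cost at hS
    have h2 : 0 ≤ ∑ j ∈ S, b j := Finset.sum_nonneg fun j _ => hb j
    have h1 : 0 ≤ ∑ j ∈ S, μ j := Finset.sum_nonneg fun j _ => hμ j
    have hs := Real.sqrt_nonneg (∑ j ∈ S, b j)
    have hsq := Real.sq_sqrt h2
    have h3 : Real.sqrt (∑ j ∈ S, b j) ≤ 1 := by linarith
    have h4 : ∑ j ∈ S, b j ≤ Real.sqrt (∑ j ∈ S, b j) := by nlinarith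
    have : ∑ j ∈ S, w j = ∑ j ∈ S, μ j + ∑ j ∈ S, b j := Finset.sum_add_distrib
    linarith
  -- infeasible sets have weight more than 3/4
  have sumw_gt : ∀ S : Finset ι, 1 < Cost μ b S → 3/4 < ∑ j ∈ S, w j := by
    intro S hS
    unfold Cost at hS
    have h2 : 0 ≤ ∑ j ∈ S, b j := Finset.sum_nonneg fun j _ => hb j
    have hs := Real.sqrt_nonneg (∑ j ∈ S, b j)
    have hsq := Real.sq_sqrt h2
    have : ∑ j ∈ S, w j = ∑ j ∈ S, μ j + ∑ j ∈ S, b j := Finset.sum_add_distrib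
    nlinarith [sq_nonneg (Real.sqrt (∑ j ∈ S, b j) - 1/2)]
  -- cost is monotone
  have cost_mono : ∀ S S' : Finset ι, S ⊆ S' → Cost μ b S ≤ Cost μ b S' := by
    intro S S' hss
    unfold Cost
    have h1 : ∑ j ∈ S, μ j ≤ ∑ j ∈ S', μ j :=
      Finset.sum_le_sum_of_subset_of_nonneg hss fun j _ _ => hμ j
    have h2 : ∑ j ∈ S, b j ≤ ∑ j ∈ S', b j :=
      Finset.sum_le_sum_of_subset_of_nonneg hss fun j _ _ => hb j
    exact add_le_add h1 (Real.sqrt_le_sqrt h2)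
  -- J is the union of the T i
  have hJT : J = Finset.univ.biUnion T := by
    ext j
    rw [hTcover j, Finset.mem_biUnion]
    simp
  -- total weight at most OPT
  have htot : ∑ j ∈ J, w j ≤ (OPT : ℝ) := by
    rw [hJT, Finset.sum_biUnion (fun i _ i' _ hii' => hTdisj i i' hii')]
    calc ∑ i : Fin OPT, ∑ j ∈ T i, w j ≤ ∑ _i : Fin OPT, (1:ℝ) :=
          Finset.sum_le_sum fun i _ => sumw_le _ (hTfeas i)
    _ = OPT := by simp
  set W1 : ℝ := ∑ j ∈ S1, w j with hW1_def
  set W2 : ℝ := ∑ i : Fin n2, ∑ j ∈ M i, w j with hW2_def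
  have hW1nn : 0 ≤ W1 := Finset.sum_nonneg fun j _ => hw j
  -- W1 + W2 ≤ OPT
  have hW12 : W1 + W2 ≤ (OPT : ℝ) := by
    have hdisj : Disjoint S1 (Finset.univ.biUnion M) := by
      rw [Finset.disjoint_biUnion_right]
      exact fun i _ => hS1M i
    have hsub : S1 ∪ Finset.univ.biUnion M ⊆ J := by
      intro j hj
      rw [hcover]
      rcases Finset.mem_union.mp hj with h | h
      · exact Or.inl h
      · obtain ⟨i, _, hi⟩ := Finset.mem_biUnion.mp h
        exact Or.inr ⟨i, hi⟩
    calc W1 + W2 = ∑ j ∈ S1 ∪ Finset.univ.biUnion M, w j := by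
          rw [Finset.sum_union hdisj,
            Finset.sum_biUnion (fun i _ i' _ hii' => hMdisj i i' hii')]
    _ ≤ ∑ j ∈ J, w j := Finset.sum_le_sum_of_subset_of_nonneg hsub fun j _ _ => hw j
    _ ≤ OPT := htot
  -- S1.card ≤ OPT
  have hn1 : S1.card ≤ OPT := by
    have hone : ∀ i : Fin OPT, (S1 ∩ T i).card ≤ 1 := by
      intro i
      rw [Finset.card_le_one]
      intro a ha c hc
      by_contra hne
      have hsub : ({a, c} : Finset ι) ⊆ T i := by
        intro x hx
        rcases Finset.mem_insert.mp hx with h | h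
        · exact h ▸ (Finset.mem_inter.mp ha).2
        · exact (Finset.mem_singleton.mp h) ▸ (Finset.mem_inter.mp hc).2
      have hle := le_trans (cost_mono _ _ hsub) (hTfeas i)
      exact absurd (hpairs a (Finset.mem_inter.mp ha).1 c (Finset.mem_inter.mp hc).1 hne)
        (not_lt.mpr hle)
    have hS1eq : S1 = Finset.univ.biUnion (fun i => S1 ∩ T i) := by
      ext j
      rw [Finset.mem_biUnion]
      constructor
      · intro hj
        have : j ∈ J := (hcover j).mpr (Or.inl hj)
        obtain ⟨i, hi⟩ := (hTcover j).mp this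
        exact ⟨i, Finset.mem_univ i, Finset.mem_inter.mpr ⟨hj, hi⟩⟩
      · rintro ⟨i, _, hi⟩
        exact (Finset.mem_inter.mp hi).1
    calc S1.card = (Finset.univ.biUnion (fun i => S1 ∩ T i)).card :=
          congrArg Finset.card hS1eq
    _ = ∑ i : Fin OPT, (S1 ∩ T i).card :=
          Finset.card_biUnion fun i _ i' _ hii' =>
            Finset.disjoint_left.mpr fun a ha ha' =>
              Finset.disjoint_left.mp (hTdisj i i' hii')
                (Finset.mem_inter.mp ha).2 (Finset.mem_inter.mp ha').2
    _ ≤ ∑ _i : Fin OPT, 1 := Finset.sum_le_sum fun i _ => hone i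
    _ = OPT := by simp
  -- W1 ≥ 3 n1 / 8 when n1 ≥ 2
  have hW1lb : 2 ≤ S1.card → 3 * (S1.card : ℝ) / 8 ≤ W1 := by
    intro hcard
    set n : ℝ := (S1.card : ℝ) with hn_def
    have hn2 : (2 : ℝ) ≤ n := by rw [hn_def]; exact_mod_cast hcard
    have key : ∀ j ∈ S1, ∀ j' ∈ S1 \ {j}, (3:ℝ)/4 ≤ w j + w j' := by
      intro j hj j' hj'
      have hj'S1 : j' ∈ S1 := (Finset.mem_sdiff.mp hj').1
      have hne : j ≠ j' := fun h => (Finset.mem_sdiff.mp hj').2 (Finset.mem_singleton.mpr h.symm)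
      have := sumw_gt _ (hpairs j hj j' hj'S1 hne)
      rw [Finset.sum_pair hne] at this
      linarith
    have inner : ∀ j ∈ S1, (n - 1) * ((3:ℝ)/4) ≤ (n - 1) * w j + (W1 - w j) := by
      intro j hj
      have hcard' : (S1 \ {j}).card = S1.card - 1 := by
        rw [Finset.card_sdiff_of_subset (Finset.singleton_subset_iff.mpr hj), Finset.card_singleton]
      have hsum : ∑ j' ∈ S1 \ {j}, (w j + w j') = (n - 1) * w j + (W1 - w j) := by
        rw [Finset.sum_add_distrib, Finset.sum_const, hcard',
          Finset.sum_sdiff_eq_sub (Finset.singleton_subset_iff.mpr hj),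
          Finset.sum_singleton]
        have : ((S1.card - 1 : ℕ) : ℝ) = n - 1 := by
          have h1 : 1 ≤ S1.card := by omega
          push_cast [h1]
          ring
        rw [nsmul_eq_mul, this]
      calc (n - 1) * ((3:ℝ)/4) = ∑ _j' ∈ S1 \ {j}, (3:ℝ)/4 := by
            rw [Finset.sum_const, hcard', nsmul_eq_mul]
            have h1 : 1 ≤ S1.card := by omega
            push_cast [h1]
            ring
      _ ≤ ∑ j' ∈ S1 \ {j}, (w j + w j') := Finset.sum_le_sum fun j' hj' => key j hj j' hj'
      _ = (n - 1) * w j + (W1 - w j) := hsum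
    have total : n * ((n - 1) * ((3:ℝ)/4)) ≤ (2 * n - 2) * W1 := by
      calc n * ((n - 1) * ((3:ℝ)/4)) = ∑ _j ∈ S1, (n - 1) * ((3:ℝ)/4) := by
            rw [Finset.sum_const, nsmul_eq_mul]
      _ ≤ ∑ j ∈ S1, ((n - 1) * w j + (W1 - w j)) :=
            Finset.sum_le_sum fun j hj => inner j hj
      _ = (2 * n - 2) * W1 := by
            rw [Finset.sum_add_distrib, ← Finset.mul_sum, Finset.sum_sub_distrib,
              Finset.sum_const, nsmul_eq_mul]
            ring
    nlinarith [total, hn2]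
  -- chain of multi-job machines
  set x : ℕ → ℝ := fun i => if h : i < n2 then ∑ j ∈ M ⟨i, h⟩, w j else 0 with hx_def
  have hxnn : ∀ i, 0 ≤ x i := by
    intro i
    simp only [hx_def]
    split
    · exact Finset.sum_nonneg fun j _ => hw j
    · exact le_refl 0
  have hchain : ∀ i, i + 1 < n2 → 3/2 < 2 * x i + x (i+1) := by
    intro i hi1
    have hi : i < n2 := Nat.lt_of_succ_lt hi1
    obtain ⟨a, ha, c, hc, hac⟩ := Finset.one_lt_card.mp (hMcard ⟨i+1, hi1⟩)
    have hMM : Disjoint (M ⟨i, hi⟩) (M ⟨i+1, hi1⟩) :=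
      hMdisj _ _ (by simp [Fin.ext_iff])
    have hxieq : x i = ∑ j ∈ M ⟨i, hi⟩, w j := by simp only [hx_def]; rw [dif_pos hi]
    have hxi1eq : x (i+1) = ∑ j ∈ M ⟨i+1, hi1⟩, w j := by
      simp only [hx_def]; rw [dif_pos hi1]
    have hinf : ∀ j ∈ M ⟨i+1, hi1⟩, 3/4 - x i < w j := by
      intro j hj
      have hjn : j ∉ M ⟨i, hi⟩ := fun h => Finset.disjoint_left.mp hMM h hj
      have := sumw_gt _ (hseq ⟨i, hi⟩ hi1 j hj)
      rw [Finset.sum_union (Finset.disjoint_singleton_right.mpr hjn),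
        Finset.sum_singleton] at this
      rw [hxieq]
      linarith
    have hsum2 : w a + w c ≤ x (i+1) := by
      rw [hxi1eq]
      have hsub : ({a, c} : Finset ι) ⊆ M ⟨i+1, hi1⟩ := by
        intro y hy
        rcases Finset.mem_insert.mp hy with h | h
        · exact h ▸ ha
        · exact (Finset.mem_singleton.mp h) ▸ hc
      calc w a + w c = ∑ j ∈ ({a, c} : Finset ι), w j := (Finset.sum_pair hac).symm
      _ ≤ ∑ j ∈ M ⟨i+1, hi1⟩, w j :=
            Finset.sum_le_sum_of_subset_of_nonneg hsub fun j _ _ => hw j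
    have h1 := hinf a ha
    have h2 := hinf c hc
    clear_value x
    have k1 : 3/2 - 2 * x i < w a + w c := by linarith only [h1, h2]
    have k2 : 3/2 - 2 * x i < x (i+1) := lt_of_lt_of_le k1 hsum2
    linarith only [k2]
  -- chain induction with dual multipliers
  have chainlem : ∀ k, k + 1 ≤ n2 →
      3/2 * (∑ i ∈ range k, dseq i) + 2 * dseq k * x k ≤ ∑ i ∈ range (k+1), x i := by
    intro k
    induction k with
    | zero =>
      intro _
      have : dseq 0 = 1/2 := by unfold dseq; norm_num
      rw [this]
      simp
    | succ k ih =>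
      intro hk1
      have hih := ih (by omega)
      have hc := hchain k (by omega)
      have hrec := dseq_rec k
      have hdk := dseq_pos k
      have hprod : dseq k * (3/2) ≤ dseq k * (2 * x k + x (k+1)) :=
        mul_le_mul_of_nonneg_left hc.le hdk.le
      have h2 : 2 * dseq (k+1) * x (k+1) = x (k+1) - dseq k * x (k+1) := by
        have : 2 * dseq (k+1) = 1 - dseq k := by linarith
        rw [this]; ring
      rw [Finset.sum_range_succ (f := x), Finset.sum_range_succ (f := dseq)]
      have hexp : dseq k * (2 * x k + x (k+1)) = 2 * (dseq k * x k) + dseq k * x (k+1) := by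
        ring
      have hexp2 : 2 * dseq k * x k = 2 * (dseq k * x k) := by ring
      rw [h2]
      rw [hexp] at hprod
      rw [hexp2] at hih
      linarith
  -- W2 = ∑ range n2 x
  have hW2eq : W2 = ∑ i ∈ range n2, x i := by
    rw [Finset.sum_range fun i => x i]
    apply Finset.sum_congr rfl
    intro i _
    simp only [hx_def]
    rw [dif_pos i.isLt]
  -- W2 lower bound
  have hW2lb : 2 ≤ n2 → ((n2 : ℝ) - 1)/2 + 1/8 ≤ W2 := by
    intro hn2'
    have hk1 : (n2 - 1) + 1 = n2 := by omega
    have hch := chainlem (n2 - 1) (by omega)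
    rw [hk1] at hch
    have hD := dseq_sum_ge (n2 - 1) (by omega)
    have hcast : ((n2 - 1 : ℕ) : ℝ) = (n2 : ℝ) - 1 := by
      have : 1 ≤ n2 := by omega
      push_cast [this]
      ring
    rw [hcast] at hD
    have hdpos := dseq_pos (n2 - 1)
    have hxnn' := hxnn (n2 - 1)
    have hterm : 0 ≤ 2 * dseq (n2 - 1) * x (n2 - 1) := by positivity
    rw [hW2eq]
    calc ((n2 : ℝ) - 1)/2 + 1/8 = 3/2 * (((n2:ℝ) - 1)/3 + 1/12) := by ring
    _ ≤ 3/2 * (∑ i ∈ range (n2 - 1), dseq i) := by linarith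
    _ ≤ 3/2 * (∑ i ∈ range (n2 - 1), dseq i) + 2 * dseq (n2-1) * x (n2-1) := by linarith
    _ ≤ ∑ i ∈ range n2, x i := hch
  -- final case analysis
  have hn1R : (S1.card : ℝ) ≤ (OPT : ℝ) := by exact_mod_cast hn1
  have hOnn : (0 : ℝ) ≤ (OPT : ℝ) := Nat.cast_nonneg OPT
  rcases Nat.lt_or_ge n2 2 with h2 | h2
  · have : (n2 : ℝ) ≤ 1 := by exact_mod_cast Nat.lt_succ_iff.mp h2
    linarith
  · have hW2' := hW2lb h2
    rcases Nat.lt_or_ge S1.card 2 with h1 | h1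
    · have hc1 : (S1.card : ℝ) ≤ 1 := by exact_mod_cast Nat.lt_succ_iff.mp h1
      have hn2le : n2 ≤ 2 * OPT := by
        by_contra hcon
        push_neg at hcon
        have : (2 * OPT + 1 : ℝ) ≤ (n2 : ℝ) := by exact_mod_cast hcon
        push_cast at this
        linarith
      have : (n2 : ℝ) ≤ 2 * (OPT : ℝ) := by exact_mod_cast hn2le
      linarith
    · have hW1' := hW1lb h1
      linarith
end
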